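/- Let u, v : J → ℝ be differentiable functions on an interval J satisfying u'(t) = −3 u(t)² − v(t) and v'(t) = u(t) for all t ∈ J. Then the function t ↦ G(u(t), v(t)), where G(u, v) = (−3u² − v + 1/6)·exp(6v), is constant on J; i.e. G is a first integral of the planar system u' = −3u² − v, v' = u. -/

import Mathlib

/-- `G(u, v) = (-3u² - v + 1/6)·exp(6v)`, a first integral of `u' = -3u² - v`, `v' = u`. -/
noncomputable def Gfun (u v : ℝ) : ℝ := (-3*u^2 - v + 1/6) * Real.exp (6*v)

/-- If `u, v` are differentiable on an interval `J` and satisfy `u' = -3u² - v`,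
`v' = u` on `J`, then `t ↦ G(u(t), v(t))` is constant on `J`: `G` is a first
integral of the planar system `u' = -3u² - v`, `v' = u`. -/
theorem stmt_10 (J : Set ℝ) (hJ : Convex ℝ J) (u v : ℝ → ℝ)
    (hu : ∀ t ∈ J, HasDerivWithinAt u (-3*(u t)^2 - v t) J t)
    (hv : ∀ t ∈ J, HasDerivWithinAt v (u t) J t) :
    ∀ s ∈ J, ∀ t ∈ J, Gfun (u s) (v s) = Gfun (u t) (v t) := by
  have key : ∀ t ∈ J, HasDerivWithinAt (fun t => Gfun (u t) (v t)) 0 J t := by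
    intro t ht
    have h1 : HasDerivWithinAt (fun t => -3*(u t)^2 - v t + 1/6)
        ((-6 * u t) * (-3*(u t)^2 - v t) - u t) J t := by
      have := ((((hu t ht).pow 2).const_mul (-3 : ℝ)).sub (hv t ht)).add_const (1/6)
      exact this.congr_deriv (by push_cast; ring)
    have h2 : HasDerivWithinAt (fun t => Real.exp (6 * v t))
        (Real.exp (6 * v t) * (6 * u t)) J t := by
      exact (((hv t ht).const_mul 6).exp)
    have := h1.mul h2
    exact this.congr_deriv (by ring)
  intro s hs t ht
  have := hJ.norm_image_sub_le_of_norm_hasFDerivWithin_le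
    (f' := fun _ => ContinuousLinearMap.smulRight (1 : ℝ →L[ℝ] ℝ) 0) (C := 0)
    (fun x hx => (key x hx).hasFDerivWithinAt) (fun x _ => by simp) ht hs
  simp only [zero_mul, norm_le_zero_iff, sub_eq_zero] at this
  exact this
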